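/- (Lemma 2) For every nonzero vector g ∈ ℝ^d, the variance of the Sign Encoding Scheme is exactly Var[φ'(g) | g] = E[‖φ'(g) − g‖² | g] = ‖g‖₁·‖g‖_∞ − ‖g‖₂². -/

import Mathlib

open MeasureTheory ProbabilityTheory
open scoped ProbabilityTheory

/-- Lemma 2: exact variance of the Sign Encoding Scheme.
For a nonzero vector `g : Fin d → ℝ` (here `‖g‖` is the ℓ∞ norm, since `Fin d → ℝ`
carries the `Pi` sup norm) and Bernoulli random variables `b i ∈ {0, 1}` with
`P[b i = 1] = |g i| / ‖g‖∞` and `P[b i = 0] = 1 - |g i| / ‖g‖∞`, the decoded vector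
`φ'(g) i = sign (g i) · b i · ‖g‖∞` satisfies
`E[‖φ'(g) - g‖₂²] = ‖g‖₁ · ‖g‖∞ - ‖g‖₂²`. -/
theorem stmt2 {Ω : Type*} [MeasureSpace Ω] [IsProbabilityMeasure (ℙ : Measure Ω)]
    {d : ℕ} (g : Fin d → ℝ) (hg : g ≠ 0)
    (b : Fin d → Ω → ℝ)
    (hbmeas : ∀ i, Measurable (b i))
    (hbval : ∀ i, ∀ ω, b i ω = 0 ∨ b i ω = 1)
    (hbone : ∀ i, ℙ {ω | b i ω = 1} = ENNReal.ofReal (|g i| / ‖g‖))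
    (hbzero : ∀ i, ℙ {ω | b i ω = 0} = ENNReal.ofReal (1 - |g i| / ‖g‖)) :
    (∫ ω, ∑ i, (Real.sign (g i) * b i ω * ‖g‖ - g i) ^ 2)
      = (∑ i, |g i|) * ‖g‖ - ∑ i, (g i) ^ 2 := by
  have hM : 0 < ‖g‖ := norm_pos_iff.mpr hg
  set M := ‖g‖ with hMdef
  -- pointwise rewrite of each summand as an indicator plus constant
  have heq : ∀ i, (fun ω => (Real.sign (g i) * b i ω * M - g i) ^ 2)
      = fun ω => ({ω | b i ω = 1}).indicator
          (fun _ => (Real.sign (g i) * M - g i) ^ 2 - (g i) ^ 2) ω + (g i) ^ 2 := by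
    intro i
    funext ω
    rcases hbval i ω with h0 | h1
    · have hne : ω ∉ {ω | b i ω = 1} := by simp [Set.mem_setOf_eq, h0]
      rw [Set.indicator_of_notMem hne, h0]; ring
    · have hmem : ω ∈ {ω | b i ω = 1} := h1
      rw [Set.indicator_of_mem hmem, h1]; ring
  have hmeasA : ∀ i, MeasurableSet {ω | b i ω = 1} :=
    fun i => hbmeas i (measurableSet_singleton 1)
  have hint : ∀ i, Integrable (fun ω => (Real.sign (g i) * b i ω * M - g i) ^ 2) ℙ := by
    intro i
    rw [heq i]
    exact ((integrable_const _).indicator (hmeasA i)).add (integrable_const _)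
  rw [integral_finset_sum _ (fun i _ => hint i)]
  have key : ∀ i, (∫ ω, (Real.sign (g i) * b i ω * M - g i) ^ 2) = |g i| * M - (g i) ^ 2 := by
    intro i
    rw [heq i, integral_add ((integrable_const _).indicator (hmeasA i)) (integrable_const _),
      integral_indicator_const _ (hmeasA i), integral_const]
    have hp : (ℙ {ω | b i ω = 1}).toReal = |g i| / M := by
      rw [hbone i, ENNReal.toReal_ofReal (by positivity)]
    rw [measureReal_def, hp]
    simp only [measureReal_def, measure_univ, ENNReal.toReal_one, smul_eq_mul, one_smul]
    rcases eq_or_ne (g i) 0 with h | h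
    · simp [h]
    · have hs2 : Real.sign (g i) ^ 2 = 1 := by
        rcases Real.sign_apply_eq_of_ne_zero _ h with hs | hs <;> rw [hs] <;> ring
      have hsc : Real.sign (g i) * g i = |g i| := by
        rcases le_or_gt 0 (g i) with hle | hlt
        · rw [Real.sign_of_pos (lt_of_le_of_ne hle (Ne.symm h)), abs_of_nonneg hle]; ring
        · rw [Real.sign_of_neg hlt, abs_of_neg hlt]; ring
      have habs : |g i| ^ 2 = g i ^ 2 := sq_abs _
      field_simp
      linear_combination (|g i| * M ^ 2) * hs2 - (2 * |g i| * M) * hsc - (2 * M) * habs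
  simp_rw [key]
  rw [Finset.sum_sub_distrib, ← Finset.sum_mul]
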